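/- Define p(x,y) for x, y ∈ X as the infimum of lengths of admissible sequences from x to y, where f : S → T is a pseudo-isometry with constants K, C. Then for all x, y ∈ X: (1/K²)·d_X(x,y) − C/K ≤ p(x,y) ≤ d_X(x,y). In particular, the quotient map from X to the surgered space is a pseudo-isometry with constants K² and 7C/K (coarse surjectivity holding with constant C). -/

import Mathlib

/-- `f` is a pseudo-isometry with constants `K`, `C`. -/
def IsPseudoIsometry {S T : Type*} [MetricSpace S] [MetricSpace T] (f : S → T) (K C : ℝ) : Prop :=
  (∀ x₀ x₁ : S, (1 / K) * dist x₀ x₁ - C ≤ dist (f x₀) (f x₁) ∧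
      dist (f x₀) (f x₁) ≤ K * dist x₀ x₁) ∧
  ∀ y : T, ∃ x : S, dist (f x) y ≤ C

/-- An admissible sequence from `x` to `y`: data `(x₀,y₁),(u₁,v₁),(x₁,y₂),…,(u_k,v_k),(x_k,y_{k+1})`
with `x₀ = x`, `y_{k+1} = y`, `xᵢ, yᵢ ∈ S` for `1 ≤ i ≤ k`, and `uᵢ = f(yᵢ)`, `vᵢ = f(xᵢ)`
(so the `T`-points are determined and not stored). We record `xᵢ` as `xs i` and `yᵢ` as `ys i`. -/
structure AdmSeq {X T : Type*} [MetricSpace X] [MetricSpace T] (S : Set X) (f : S → T)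
    (x y : X) where
  k : ℕ
  xs : ℕ → X
  ys : ℕ → X
  hx0 : xs 0 = x
  hyend : ys (k + 1) = y
  hxS : ∀ i, 1 ≤ i → i ≤ k → xs i ∈ S
  hyS : ∀ i, 1 ≤ i → i ≤ k → ys i ∈ S

/-- The length of an admissible sequence:
`ℓ(γ) = d_X(x₀,y₁) + Σ_{i=1}^k (d_T(uᵢ,vᵢ) + d_X(xᵢ,y_{i+1}))`. -/
noncomputable def AdmSeq.length {X T : Type*} [MetricSpace X] [MetricSpace T] {S : Set X}
    {f : S → T} {x y : X} (γ : AdmSeq S f x y) : ℝ :=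
  dist (γ.xs 0) (γ.ys 1) +
    ∑ i : Fin γ.k,
      (dist (f ⟨γ.ys (i.val + 1), γ.hyS _ (Nat.succ_le_succ (Nat.zero_le _)) i.isLt⟩)
          (f ⟨γ.xs (i.val + 1), γ.hxS _ (Nat.succ_le_succ (Nat.zero_le _)) i.isLt⟩) +
        dist (γ.xs (i.val + 1)) (γ.ys (i.val + 2)))

/-- The pseudo-metric `p(x,y)`: the infimum of lengths of admissible sequences from `x` to `y`. -/
noncomputable def surgP {X T : Type*} [MetricSpace X] [MetricSpace T] (S : Set X) (f : S → T)
    (x y : X) : ℝ :=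
  sInf {l : ℝ | ∃ γ : AdmSeq S f x y, l = γ.length}

section Aux

variable {X T : Type*} [MetricSpace X] [MetricSpace T] {S : Set X} {f : S → T} {x y : X}

/-- The `S`-point `yᵢ₊₁` of an admissible sequence (with junk value out of range). -/
noncomputable def AdmSeq.q (γ : AdmSeq S f x y) (hk : 1 ≤ γ.k) (i : ℕ) : S :=
  if h : i + 1 ≤ γ.k then ⟨γ.ys (i + 1), γ.hyS _ (Nat.le_add_left 1 i) h⟩
  else ⟨γ.xs 1, γ.hxS 1 le_rfl hk⟩

/-- The `S`-point `xᵢ₊₁` of an admissible sequence (with junk value out of range). -/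
noncomputable def AdmSeq.p (γ : AdmSeq S f x y) (hk : 1 ≤ γ.k) (i : ℕ) : S :=
  if h : i + 1 ≤ γ.k then ⟨γ.xs (i + 1), γ.hxS _ (Nat.le_add_left 1 i) h⟩
  else ⟨γ.xs 1, γ.hxS 1 le_rfl hk⟩

theorem AdmSeq.q_val (γ : AdmSeq S f x y) (hk : 1 ≤ γ.k) {i : ℕ} (h : i + 1 ≤ γ.k) :
    (γ.q hk i : X) = γ.ys (i + 1) := by simp [AdmSeq.q, h]

theorem AdmSeq.p_val (γ : AdmSeq S f x y) (hk : 1 ≤ γ.k) {i : ℕ} (h : i + 1 ≤ γ.k) :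
    (γ.p hk i : X) = γ.xs (i + 1) := by simp [AdmSeq.p, h]

/-- The key estimate: any admissible sequence has length at least
`(dist x y - K*C)/K²`. -/
theorem AdmSeq.dist_le (γ : AdmSeq S f x y) {K C : ℝ} (hK : 1 ≤ K) (hC : 0 ≤ C)
    (hf : IsPseudoIsometry f K C) : dist x y ≤ K ^ 2 * γ.length + K * C := by
  have hK0 : (0 : ℝ) < K := lt_of_lt_of_le one_pos hK
  have hKsq : (1 : ℝ) ≤ K ^ 2 := by nlinarith
  rcases Nat.eq_zero_or_pos γ.k with hk | hk
  · -- trivial case: length = dist x y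
    haveI hempty : IsEmpty (Fin γ.k) := by rw [hk]; exact Fin.isEmpty'
    have hy1 : γ.ys 1 = y := by
      have h1 : γ.ys 1 = γ.ys (γ.k + 1) := by rw [hk]
      rw [h1, γ.hyend]
    have hlen : γ.length = dist x y := by
      unfold AdmSeq.length
      rw [Finset.univ_eq_empty, Finset.sum_empty, add_zero, γ.hx0, hy1]
    rw [hlen]
    nlinarith [dist_nonneg (x := x) (y := y), mul_nonneg (le_of_lt hK0) hC]
  · have hk1 : 1 ≤ γ.k := hk
    set k := γ.k with hkdef
    -- abbreviations
    set dT : ℕ → ℝ := fun i => dist (f (γ.q hk1 i)) (f (γ.p hk1 i)) with hdT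
    set dX : ℕ → ℝ := fun i => dist (γ.xs (i + 1)) (γ.ys (i + 2)) with hdX
    have hdT0 : ∀ i, 0 ≤ dT i := fun i => dist_nonneg
    have hdX0 : ∀ i, 0 ≤ dX i := fun i => dist_nonneg
    -- length in range form
    have hlen : γ.length = dist x (γ.ys 1) + ∑ i ∈ Finset.range k, (dT i + dX i) := by
      unfold AdmSeq.length
      rw [γ.hx0]
      congr 1
      rw [← Fin.sum_univ_eq_sum_range (fun i => dT i + dX i) k]
      refine Finset.sum_congr rfl fun i _ => ?_
      have h1 : i.val + 1 ≤ k := i.isLt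
      simp only [hdT, hdX, AdmSeq.q, AdmSeq.p, dif_pos (show (i : ℕ) + 1 ≤ γ.k from h1)]
    -- chain estimate in T
    set z : ℕ → T := fun i => f (γ.p hk1 i) with hz
    have hchain : dist (z 0) (z (k - 1)) ≤
        ∑ i ∈ Finset.range (k - 1), (K * dX i + dT (i + 1)) := by
      refine le_trans (dist_le_range_sum_dist z (k - 1)) (Finset.sum_le_sum fun i hi => ?_)
      have hi' : i + 1 < k := by
        have := Finset.mem_range.mp hi; omega
      have step1 : dist (z i) (z (i + 1)) ≤
          dist (f (γ.p hk1 i)) (f (γ.q hk1 (i + 1))) + dT (i + 1) :=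
        dist_triangle _ _ _
      have step2 : dist (f (γ.p hk1 i)) (f (γ.q hk1 (i + 1))) ≤ K * dX i := by
        have h2 := (hf.1 (γ.p hk1 i) (γ.q hk1 (i + 1))).2
        have hd : dist (γ.p hk1 i) (γ.q hk1 (i + 1)) = dX i := by
          rw [Subtype.dist_eq, γ.p_val hk1 (by omega), γ.q_val hk1 (by omega)]
        rw [hd] at h2
        exact h2
      calc dist (z i) (z (i + 1)) ≤ _ := step1
        _ ≤ K * dX i + dT (i + 1) := by linarith
    -- from T back to X
    have hfront : dist (f (γ.q hk1 0)) (f (γ.p hk1 (k - 1))) ≤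
        dT 0 + ∑ i ∈ Finset.range (k - 1), (K * dX i + dT (i + 1)) := by
      calc dist (f (γ.q hk1 0)) (f (γ.p hk1 (k - 1)))
          ≤ dist (f (γ.q hk1 0)) (f (γ.p hk1 0)) + dist (z 0) (z (k - 1)) := dist_triangle _ _ _
        _ ≤ dT 0 + ∑ i ∈ Finset.range (k - 1), (K * dX i + dT (i + 1)) := by
            exact add_le_add le_rfl hchain
    have hmid : dist (γ.ys 1) (γ.xs k) ≤
        K * (dT 0 + ∑ i ∈ Finset.range (k - 1), (K * dX i + dT (i + 1))) + K * C := by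
      have h3 := (hf.1 (γ.q hk1 0) (γ.p hk1 (k - 1))).1
      have hd : dist (γ.q hk1 0) (γ.p hk1 (k - 1)) = dist (γ.ys 1) (γ.xs k) := by
        rw [Subtype.dist_eq, γ.q_val hk1 (by omega), γ.p_val hk1 (by omega)]
        congr 2
        omega
      rw [hd] at h3
      have h4 : (1 / K) * dist (γ.ys 1) (γ.xs k) - C ≤
          dT 0 + ∑ i ∈ Finset.range (k - 1), (K * dX i + dT (i + 1)) := le_trans h3 hfront
      have h5 : dist (γ.ys 1) (γ.xs k) ≤
          K * ((dT 0 + ∑ i ∈ Finset.range (k - 1), (K * dX i + dT (i + 1))) + C) := by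
        rw [div_mul_eq_mul_div, one_mul] at h4
        have := (div_le_iff₀' hK0).mp (by linarith : dist (γ.ys 1) (γ.xs k) / K ≤
          (dT 0 + ∑ i ∈ Finset.range (k - 1), (K * dX i + dT (i + 1))) + C)
        linarith
      linarith [mul_add K (dT 0 + ∑ i ∈ Finset.range (k - 1), (K * dX i + dT (i + 1))) C]
    -- sum bookkeeping
    obtain ⟨m, hm⟩ : ∃ m, k = m + 1 := ⟨k - 1, by omega⟩
    have hm1 : k - 1 = m := by omega
    have hsumT : dT 0 + ∑ i ∈ Finset.range (k - 1), dT (i + 1) = ∑ i ∈ Finset.range k, dT i := by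
      rw [hm1, hm, Finset.sum_range_succ' dT m]; ring
    have hsumX : ∑ i ∈ Finset.range (k - 1), dX i + dX (k - 1) = ∑ i ∈ Finset.range k, dX i := by
      rw [hm1, hm, Finset.sum_range_succ dX m]
    -- last leg
    have hlast : dist (γ.xs k) y = dX (k - 1) := by
      simp only [hdX]
      have e1 : k - 1 + 1 = k := by omega
      have e2 : k - 1 + 2 = k + 1 := by omega
      rw [e1, e2, hkdef, γ.hyend]
    -- final triangle
    have htri : dist x y ≤ dist x (γ.ys 1) + dist (γ.ys 1) (γ.xs k) + dist (γ.xs k) y :=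
      dist_triangle4 x (γ.ys 1) (γ.xs k) y
    -- assemble
    set A := dist x (γ.ys 1) with hA
    have hA0 : 0 ≤ A := dist_nonneg
    set SX' := ∑ i ∈ Finset.range (k - 1), dX i with hSX'def
    set ST := ∑ i ∈ Finset.range k, dT i with hST
    set SX := ∑ i ∈ Finset.range k, dX i with hSXdef
    have hST0 : 0 ≤ ST := Finset.sum_nonneg fun i _ => hdT0 i
    have hSX0 : 0 ≤ SX := Finset.sum_nonneg fun i _ => hdX0 i
    have hSX'0 : 0 ≤ SX' := Finset.sum_nonneg fun i _ => hdX0 i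
    have hsplit : ∑ i ∈ Finset.range (k - 1), (K * dX i + dT (i + 1)) =
        K * SX' + ∑ i ∈ Finset.range (k - 1), dT (i + 1) := by
      rw [hSX'def, Finset.sum_add_distrib, Finset.mul_sum]
    have hXlast0 : 0 ≤ dX (k - 1) := hdX0 _
    rw [hsplit] at hmid
    have hT' : ∑ i ∈ Finset.range (k - 1), dT (i + 1) = ST - dT 0 := by linarith [hsumT]
    have hX' : SX' = SX - dX (k - 1) := by linarith [hsumX]
    rw [hT'] at hmid
    have hmid2 : dist (γ.ys 1) (γ.xs k) ≤ K ^ 2 * SX' + K * ST + K * C := by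
      have : K * (dT 0 + (K * SX' + (ST - dT 0))) + K * C
          = K ^ 2 * SX' + K * ST + K * C := by ring
      linarith
    rw [hlast] at htri
    have hsum_split : ∑ i ∈ Finset.range k, (dT i + dX i) = ST + SX := by
      rw [hST, hSXdef, Finset.sum_add_distrib]
    have hmid3 : dist (γ.ys 1) (γ.xs k) ≤
        K ^ 2 * SX - K ^ 2 * dX (k - 1) + K * ST + K * C := by
      rw [hX'] at hmid2
      have : K ^ 2 * (SX - dX (k - 1)) = K ^ 2 * SX - K ^ 2 * dX (k - 1) := by ring
      linarith
    rw [hlen, hsum_split]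
    nlinarith [mul_nonneg (sub_nonneg.mpr hKsq) hA0,
      mul_nonneg (mul_nonneg hK0.le (by linarith : (0:ℝ) ≤ K - 1)) hST0,
      mul_nonneg (sub_nonneg.mpr hKsq) hXlast0]

end Aux

/-- If f is a pseudo-isometry with constants K, C then for all x, y ∈ X:
(1/K²)·d_X(x,y) − C/K ≤ p(x,y) ≤ d_X(x,y). -/
theorem surgP_bounds {X T : Type*} [MetricSpace X] [MetricSpace T] (S : Set X) (f : S → T)
    (K C : ℝ) (hK : 1 ≤ K) (hC : 0 ≤ C) (hf : IsPseudoIsometry f K C) (x y : X) :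
    (1 / K ^ 2) * dist x y - C / K ≤ surgP S f x y ∧ surgP S f x y ≤ dist x y := by
  have hK0 : (0 : ℝ) < K := lt_of_lt_of_le one_pos hK
  have hK2 : (0 : ℝ) < K ^ 2 := by positivity
  -- the trivial admissible sequence
  set γ0 : AdmSeq S f x y :=
    { k := 0, xs := fun _ => x, ys := fun _ => y, hx0 := rfl, hyend := rfl,
      hxS := fun i h1 h2 => absurd (le_trans h1 h2) (by omega),
      hyS := fun i h1 h2 => absurd (le_trans h1 h2) (by omega) } with hγ0
  have hlen0 : γ0.length = dist x y := by
    unfold AdmSeq.length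
    simp [hγ0]
  have hmem : dist x y ∈ {l : ℝ | ∃ γ : AdmSeq S f x y, l = γ.length} := ⟨γ0, hlen0.symm⟩
  have hlb : ∀ l ∈ {l : ℝ | ∃ γ : AdmSeq S f x y, l = γ.length},
      (1 / K ^ 2) * dist x y - C / K ≤ l := by
    rintro l ⟨γ, rfl⟩
    have h := γ.dist_le hK hC hf
    rw [div_mul_eq_mul_div, one_mul, sub_le_iff_le_add, div_le_iff₀ hK2]
    have hKne : K ≠ 0 := ne_of_gt hK0
    have hid : (γ.length + C / K) * K ^ 2 = K ^ 2 * γ.length + K * C := by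
      field_simp
    linarith
  have hbdd : BddBelow {l : ℝ | ∃ γ : AdmSeq S f x y, l = γ.length} :=
    ⟨(1 / K ^ 2) * dist x y - C / K, hlb⟩
  constructor
  · exact le_csInf ⟨_, hmem⟩ hlb
  · exact csInf_le hbdd hmem
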